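/- For any stochastic matrix W from a finite set X to pmfs on a finite set Y, the order-α Rényi capacity C_α(W) := sup_P I_α(P;W) is nondecreasing and continuous in α on (0,1]. -/

import Mathlib

open Real MeasureTheory Filter

def IsPMF {Y : Type*} [Fintype Y] (W : Y → ℝ) : Prop :=
  (∀ y, 0 ≤ W y) ∧ ∑ y, W y = 1

noncomputable def renyiDiv {Y : Type*} [Fintype Y] (α : ℝ) (W Q : Y → ℝ) : ℝ :=
  if α = 1 then ∑ y, W y * Real.log (W y / Q y)
  else (α - 1)⁻¹ * Real.log (∑ y, W y ^ α * Q y ^ (1 - α))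

open Classical in
/-- Extended-real-valued order-`α` Rényi divergence, taking the value `⊤` when the
divergence is infinite. -/
noncomputable def renyiDivE {Y : Type*} [Fintype Y] (α : ℝ) (W Q : Y → ℝ) : ENNReal :=
  if α = 1 then
    (if ∀ y, Q y = 0 → W y = 0 then ENNReal.ofReal (renyiDiv 1 W Q) else ⊤)
  else
    (if 0 < ∑ y, W y ^ α * Q y ^ (1 - α) then ENNReal.ofReal (renyiDiv α W Q) else ⊤)

/-- The order-`α` tilted pmf `W^α_Q`. -/
noncomputable def tilt {Y : Type*} [Fintype Y] (α : ℝ) (W Q : Y → ℝ) : Y → ℝ :=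
  fun y => Real.exp ((1 - α) * renyiDiv α W Q) * W y ^ α * Q y ^ (1 - α)

/-- The order-`α` Rényi information `I_α(P;W)` (mutual information for `α = 1`). -/
noncomputable def renyiInfo {X Y : Type*} [Fintype X] [Fintype Y] (α : ℝ) (P : X → ℝ)
    (W : X → Y → ℝ) : ℝ :=
  if α = 1 then ∑ x, P x * ∑ y, W x y * Real.log (W x y / (∑ x', P x' * W x' y))
  else (α / (α - 1)) * Real.log (∑ y, (∑ x, P x * W x y ^ α) ^ α⁻¹)

/-- The order-`α` Rényi capacity `C_α(W) = sup_P I_α(P;W)`. -/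
noncomputable def renyiCap {X Y : Type*} [Fintype X] [Fintype Y] (α : ℝ) (W : X → Y → ℝ) : ℝ :=
  sSup {c | ∃ P : X → ℝ, IsPMF P ∧ c = renyiInfo α P W}

/-- The sphere packing exponent `E_sp(R,W)`. -/
noncomputable def spe {X Y : Type*} [Fintype X] [Fintype Y] (R : ℝ) (W : X → Y → ℝ) : ℝ :=
  sSup {e | ∃ α ∈ Set.Ioo (0:ℝ) 1, e = ((1 - α) / α) * (renyiCap α W - R)}

/-- The order-`α` Rényi mean `q_{α,P}`. -/
noncomputable def renyiMean {X Y : Type*} [Fintype X] [Fintype Y] (α : ℝ) (P : X → ℝ)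
    (W : X → Y → ℝ) : Y → ℝ :=
  fun y => (∑ x, P x * W x y ^ α) ^ α⁻¹ / ∑ y', (∑ x, P x * W x y' ^ α) ^ α⁻¹

open Topology in
section
set_option linter.unusedSectionVars false

namespace RC

variable {X Y : Type*} [Fintype X] [Fintype Y]

noncomputable def Tf (α : ℝ) (P : X → ℝ) (W : X → Y → ℝ) (y : Y) : ℝ :=
  ∑ x, P x * W x y ^ α

noncomputable def Sg (α : ℝ) (P : X → ℝ) (W : X → Y → ℝ) : ℝ :=
  ∑ y, Tf α P W y ^ α⁻¹

section base

variable {W : X → Y → ℝ} {P : X → ℝ} (hW : ∀ x, IsPMF (W x)) (hP : IsPMF P)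

include hW hP

lemma W_nonneg (x : X) (y : Y) : 0 ≤ W x y := (hW x).1 y

lemma W_le_one (x : X) (y : Y) : W x y ≤ 1 := by
  have h := (hW x).2
  calc W x y ≤ ∑ y', W x y' := Finset.single_le_sum (f := fun y' => W x y')
        (fun i _ => (hW x).1 i) (Finset.mem_univ y)
    _ = 1 := h

lemma Tf_nonneg {α : ℝ} (y : Y) : 0 ≤ Tf α P W y :=
  Finset.sum_nonneg fun x _ => mul_nonneg (hP.1 x) (Real.rpow_nonneg ((hW x).1 y) α)

lemma Tf_pos {α : ℝ} (hα : 0 < α) {x : X} {y : Y} (h : 0 < P x * W x y) :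
    0 < Tf α P W y := by
  have hPx : 0 < P x := by
    rcases lt_or_ge 0 (P x) with h' | h'
    · exact h'
    · exfalso; nlinarith [(hW x).1 y]
  have hWx : 0 < W x y := by
    rcases lt_or_ge 0 (W x y) with h' | h'
    · exact h'
    · exfalso; nlinarith
  have : 0 < P x * W x y ^ α := mul_pos hPx (Real.rpow_pos_of_pos hWx α)
  calc (0:ℝ) < P x * W x y ^ α := this
    _ ≤ Tf α P W y := Finset.single_le_sum
        (f := fun x' => P x' * W x' y ^ α)
        (fun i _ => mul_nonneg (hP.1 i) (Real.rpow_nonneg ((hW i).1 y) α))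
        (Finset.mem_univ x)

lemma Tf_one (y : Y) : Tf 1 P W y = ∑ x, P x * W x y := by
  simp [Tf, Real.rpow_one]

lemma sum_Tf_one : ∑ y, Tf 1 P W y = 1 := by
  simp only [Tf_one hW hP]
  rw [Finset.sum_comm]
  simp only [← Finset.mul_sum]
  simp only [fun x => (hW x).2]
  simpa using hP.2

lemma exists_pos : ∃ x y, 0 < P x * W x y := by
  by_contra hc
  push_neg at hc
  have : ∑ y, Tf 1 P W y = 0 := by
    apply Finset.sum_eq_zero
    intro y _
    rw [Tf_one hW hP]
    apply Finset.sum_eq_zero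
    intro x _
    have h1 := hc x y
    have h2 : 0 ≤ P x * W x y := mul_nonneg (hP.1 x) ((hW x).1 y)
    linarith
  rw [sum_Tf_one hW hP] at this
  norm_num at this

lemma Sg_pos {α : ℝ} (hα : 0 < α) : 0 < Sg α P W := by
  obtain ⟨x, y, hxy⟩ := exists_pos hW hP
  have hT : 0 < Tf α P W y := Tf_pos hW hP hα hxy
  have : (0:ℝ) < Tf α P W y ^ α⁻¹ := Real.rpow_pos_of_pos hT _
  calc (0:ℝ) < Tf α P W y ^ α⁻¹ := this
    _ ≤ Sg α P W := Finset.single_le_sum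
        (f := fun y' => Tf α P W y' ^ α⁻¹)
        (fun i _ => Real.rpow_nonneg (Tf_nonneg hW hP i) _) (Finset.mem_univ y)

/-- Power-mean monotonicity: `Σ` is nondecreasing in `α`. -/
lemma Sg_mono {α β : ℝ} (hα : 0 < α) (hαβ : α ≤ β) : Sg α P W ≤ Sg β P W := by
  have hβ : 0 < β := lt_of_lt_of_le hα hαβ
  apply Finset.sum_le_sum
  intro y _
  -- (Tf α y)^(1/α) ≤ (Tf β y)^(1/β)
  have hz : ∀ x ∈ Finset.univ (α := X), W x y ^ α ∈ Set.Ici (0:ℝ) :=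
    fun x _ => Real.rpow_nonneg ((hW x).1 y) α
  have hjen := (convexOn_rpow (le_div_iff₀ hα |>.mpr (by linarith) : 1 ≤ β / α)).map_sum_le
    (t := Finset.univ) (w := P) (p := fun x => W x y ^ α) (fun i _ => hP.1 i) hP.2 hz
  simp only [smul_eq_mul] at hjen
  have hpt : ∀ x, P x * (W x y ^ α) ^ (β / α) = P x * W x y ^ β := by
    intro x
    rw [← Real.rpow_mul ((hW x).1 y)]
    rw [mul_div_cancel₀ _ (ne_of_gt hα)]
  simp only [hpt] at hjen
  -- hjen : (Tf α y) ^ (β/α) ≤ Tf β y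
  have h1 : Tf α P W y ^ α⁻¹ = (Tf α P W y ^ (β / α)) ^ β⁻¹ := by
    rw [← Real.rpow_mul (Tf_nonneg hW hP y)]
    congr 1
    field_simp
  rw [h1]
  exact Real.rpow_le_rpow (Real.rpow_nonneg (Tf_nonneg hW hP y) _) hjen
    (le_of_lt (inv_pos.mpr hβ))

lemma Sg_one : Sg 1 P W = 1 := by
  unfold Sg
  simp only [inv_one, Real.rpow_one]
  exact sum_Tf_one hW hP

lemma Sg_le_one {α : ℝ} (hα : 0 < α) (hα1 : α ≤ 1) : Sg α P W ≤ 1 := by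
  rw [← Sg_one hW hP]
  exact Sg_mono hW hP hα hα1

lemma renyiInfo_eq {α : ℝ} (hα : α ≠ 1) :
    renyiInfo α P W = (α / (α - 1)) * Real.log (Sg α P W) := by
  rw [renyiInfo, if_neg hα]; rfl

lemma renyiInfo_eq' {α : ℝ} (hα : α ≠ 1) :
    renyiInfo α P W = (α / (1 - α)) * (- Real.log (Sg α P W)) := by
  rw [renyiInfo_eq hW hP hα]
  have h : α - 1 = -(1 - α) := by ring
  rw [h, div_neg, neg_mul, mul_neg]

lemma renyiInfo_nonneg {α : ℝ} (hα : 0 < α) (hα1 : α < 1) : 0 ≤ renyiInfo α P W := by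
  rw [renyiInfo_eq' hW hP (ne_of_lt hα1)]
  have hlog : Real.log (Sg α P W) ≤ 0 :=
    Real.log_nonpos (le_of_lt (Sg_pos hW hP hα)) (Sg_le_one hW hP hα (le_of_lt hα1))
  exact mul_nonneg (div_nonneg hα.le (by linarith)) (neg_nonneg.mpr hlog)


/-- Hölder step: `I_α ≤ D̃_α(Q)` for any pmf `Q` on `Y`. -/
lemma holder_le {α : ℝ} (hα : 0 < α) (hα1 : α < 1) {Q : Y → ℝ} (hQ0 : ∀ y, 0 ≤ Q y)
    (hQ1 : ∑ y, Q y = 1) (hpos : 0 < ∑ y, Tf α P W y * Q y ^ (1 - α)) :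
    renyiInfo α P W ≤ (α - 1)⁻¹ * Real.log (∑ y, Tf α P W y * Q y ^ (1 - α)) := by
  have hconj : Real.HolderConjugate α⁻¹ (1 - α)⁻¹ := by
    constructor
    · rw [inv_inv, inv_inv, inv_one]; ring
    · exact inv_pos.mpr hα
    · exact inv_pos.mpr (by linarith)
  have hH := Real.inner_le_Lp_mul_Lq_of_nonneg (s := Finset.univ)
    (f := fun y => Tf α P W y) (g := fun y => Q y ^ (1 - α)) hconj
    (fun y _ => Tf_nonneg hW hP y) (fun y _ => Real.rpow_nonneg (hQ0 y) _)
  have h1 : ∀ y : Y, (Q y ^ (1 - α)) ^ ((1 - α)⁻¹) = Q y := by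
    intro y
    rw [← Real.rpow_mul (hQ0 y), mul_inv_cancel₀ (by linarith : (1:ℝ) - α ≠ 0), Real.rpow_one]
  simp only [h1, one_div, inv_inv, hQ1, Real.one_rpow] at hH
  -- hH : ∑ y, Tf α y * Q y ^ (1-α) ≤ (∑ y, Tf α y ^ α⁻¹) ^ α * 1
  rw [mul_one] at hH
  have hSg : 0 < Sg α P W := Sg_pos hW hP hα
  have h2 : Real.log (∑ y, Tf α P W y * Q y ^ (1 - α)) ≤ α * Real.log (Sg α P W) := by
    rw [← Real.log_rpow hSg]
    exact Real.log_le_log hpos hH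
  have h3 : (α - 1)⁻¹ < 0 := inv_lt_zero.mpr (by linarith)
  have h4 := mul_le_mul_of_nonpos_left h2 (le_of_lt h3)
  rw [renyiInfo_eq hW hP (ne_of_lt hα1)]
  calc α / (α - 1) * Real.log (Sg α P W) = (α - 1)⁻¹ * (α * Real.log (Sg α P W)) := by ring
    _ ≤ (α - 1)⁻¹ * Real.log (∑ y, Tf α P W y * Q y ^ (1 - α)) := h4

/-- Jensen step: monotonicity of `D̃_γ(Q)` in the order `γ`. -/
lemma jensen_pow {α β : ℝ} (hα : 0 < α) (hαβ : α ≤ β) (hβ : β < 1) {Q : Y → ℝ}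
    (hQ0 : ∀ y, 0 ≤ Q y) (hpos : 0 < ∑ y, Tf β P W y * Q y ^ (1 - β)) :
    (α - 1)⁻¹ * Real.log (∑ y, Tf α P W y * Q y ^ (1 - α)) ≤
      (β - 1)⁻¹ * Real.log (∑ y, Tf β P W y * Q y ^ (1 - β)) := by
  have hα1 : α < 1 := lt_of_le_of_lt hαβ hβ
  have hβ0 : 0 < β := lt_of_lt_of_le hα hαβ
  have h1β : (0:ℝ) < 1 - β := by linarith
  set θ : ℝ := (1 - α) / (1 - β) with hθdef
  have hθ : 1 ≤ θ := (le_div_iff₀ h1β).mpr (by linarith)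
  set z : X × Y → ℝ := fun p => (Q p.2 / W p.1 p.2) ^ (1 - β) with hzdef
  have hz0 : ∀ p : X × Y, 0 ≤ z p := fun p =>
    Real.rpow_nonneg (div_nonneg (hQ0 p.2) ((hW p.1).1 p.2)) _
  -- pointwise identity
  have ptw : ∀ (γ : ℝ), 0 < γ → γ < 1 → ∀ (x : X) (y : Y),
      P x * W x y * (Q y / W x y) ^ (1 - γ) = P x * (W x y ^ γ * Q y ^ (1 - γ)) := by
    intro γ hγ hγ1 x y
    by_cases hw : W x y = 0
    · rw [hw]
      rw [Real.zero_rpow (ne_of_gt hγ)]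
      ring
    · have hw' : 0 < W x y := lt_of_le_of_ne ((hW x).1 y) (Ne.symm hw)
      rw [Real.div_rpow (hQ0 y) ((hW x).1 y)]
      have hWγ : W x y ^ γ = W x y / W x y ^ (1 - γ) := by
        rw [eq_div_iff (ne_of_gt (Real.rpow_pos_of_pos hw' _)), ← Real.rpow_add hw']
        norm_num
      rw [hWγ]
      field_simp
  have sum_eq : ∀ (γ : ℝ), 0 < γ → γ < 1 →
      ∑ y, Tf γ P W y * Q y ^ (1 - γ) =
        ∑ p : X × Y, (P p.1 * W p.1 p.2) * (Q p.2 / W p.1 p.2) ^ (1 - γ) := by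
    intro γ hγ hγ1
    rw [Fintype.sum_prod_type]
    rw [Finset.sum_comm]
    apply Finset.sum_congr rfl
    intro y _
    rw [Tf, Finset.sum_mul]
    apply Finset.sum_congr rfl
    intro x _
    rw [ptw γ hγ hγ1 x y]
    ring
  have hμ0 : ∀ p : X × Y, 0 ≤ P p.1 * W p.1 p.2 := fun p =>
    mul_nonneg (hP.1 p.1) ((hW p.1).1 p.2)
  have hμ1 : ∑ p : X × Y, P p.1 * W p.1 p.2 = 1 := by
    rw [Fintype.sum_prod_type]
    simp only [← Finset.mul_sum]
    simp only [fun x => (hW x).2]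
    simpa using hP.2
  have hjen := (convexOn_rpow hθ).map_sum_le (t := Finset.univ)
    (w := fun p : X × Y => P p.1 * W p.1 p.2) (p := z)
    (fun p _ => hμ0 p) hμ1 (fun p _ => hz0 p)
  simp only [smul_eq_mul] at hjen
  have hzθ : ∀ p : X × Y, z p ^ θ = (Q p.2 / W p.1 p.2) ^ (1 - α) := by
    intro p
    rw [hzdef]
    rw [← Real.rpow_mul (div_nonneg (hQ0 p.2) ((hW p.1).1 p.2))]
    congr 1
    rw [hθdef]
    field_simp
  have hSβ : ∑ p : X × Y, (P p.1 * W p.1 p.2) * z p = ∑ y, Tf β P W y * Q y ^ (1 - β) := by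
    rw [sum_eq β hβ0 hβ]
  have hSα : ∑ p : X × Y, (P p.1 * W p.1 p.2) * z p ^ θ
      = ∑ y, Tf α P W y * Q y ^ (1 - α) := by
    rw [sum_eq α hα hα1]
    apply Finset.sum_congr rfl
    intro p _
    rw [hzθ p]
  rw [hSβ, hSα] at hjen
  -- hjen : (Sβ) ^ θ ≤ Sα
  have hSαpos : 0 < ∑ y, Tf α P W y * Q y ^ (1 - α) :=
    lt_of_lt_of_le (Real.rpow_pos_of_pos hpos θ) hjen
  have hlog : θ * Real.log (∑ y, Tf β P W y * Q y ^ (1 - β)) ≤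
      Real.log (∑ y, Tf α P W y * Q y ^ (1 - α)) := by
    rw [← Real.log_rpow hpos]
    exact Real.log_le_log (Real.rpow_pos_of_pos hpos θ) hjen
  have hneg : (α - 1)⁻¹ ≤ 0 := le_of_lt (inv_lt_zero.mpr (by linarith))
  have h4 := mul_le_mul_of_nonpos_left hlog hneg
  have h5 : (α - 1)⁻¹ * (θ * Real.log (∑ y, Tf β P W y * Q y ^ (1 - β)))
      = (β - 1)⁻¹ * Real.log (∑ y, Tf β P W y * Q y ^ (1 - β)) := by
    rw [hθdef]
    rw [show (α - 1)⁻¹ * ((1 - α) / (1 - β) * Real.log (∑ y, Tf β P W y * Q y ^ (1 - β)))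
      = ((α - 1)⁻¹ * ((1 - α) / (1 - β))) * Real.log (∑ y, Tf β P W y * Q y ^ (1 - β)) by ring]
    congr 1
    have h₁ : α - (1:ℝ) ≠ 0 := by linarith
    rw [show (1:ℝ) - α = -(α - 1) by ring, show (1:ℝ) - β = -(β - 1) by ring,
      neg_div_neg_eq, ← mul_div_assoc, inv_mul_cancel₀ h₁, one_div]
  linarith [h4, h5.symm.le, h5.le]

lemma Q1_pos {x : X} {y : Y} (h : 0 < P x * W x y) : 0 < Tf 1 P W y := Tf_pos hW hP one_pos h

/-- Jensen (exp) step: `D̃_α(Q₁) ≤ I_1`. -/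
lemma jensen_exp {α : ℝ} (hα : 0 < α) (hα1 : α < 1) :
    (α - 1)⁻¹ * Real.log (∑ y, Tf α P W y * (Tf 1 P W y) ^ (1 - α)) ≤ renyiInfo 1 P W := by
  set g : X × Y → ℝ := fun p => (α - 1) * Real.log (W p.1 p.2 / Tf 1 P W p.2) with hgdef
  have hμ0 : ∀ p : X × Y, 0 ≤ P p.1 * W p.1 p.2 := fun p =>
    mul_nonneg (hP.1 p.1) ((hW p.1).1 p.2)
  have hμ1 : ∑ p : X × Y, P p.1 * W p.1 p.2 = 1 := by
    rw [Fintype.sum_prod_type]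
    simp only [← Finset.mul_sum]
    simp only [fun x => (hW x).2]
    simpa using hP.2
  have hjen := convexOn_exp.map_sum_le (t := Finset.univ)
    (w := fun p : X × Y => P p.1 * W p.1 p.2) (p := g)
    (fun p _ => hμ0 p) hμ1 (fun p _ => Set.mem_univ _)
  simp only [smul_eq_mul] at hjen
  have claim1 : ∑ p : X × Y, (P p.1 * W p.1 p.2) * g p = (α - 1) * renyiInfo 1 P W := by
    rw [renyiInfo, if_pos rfl, Fintype.sum_prod_type, Finset.mul_sum]
    apply Finset.sum_congr rfl
    intro x _
    rw [Finset.mul_sum, Finset.mul_sum]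
    apply Finset.sum_congr rfl
    intro y _
    rw [hgdef]
    have : Tf 1 P W y = ∑ x', P x' * W x' y := Tf_one hW hP y
    rw [← this]
    ring
  have claim2 : ∑ p : X × Y, (P p.1 * W p.1 p.2) * Real.exp (g p)
      = ∑ y, Tf α P W y * (Tf 1 P W y) ^ (1 - α) := by
    rw [Fintype.sum_prod_type, Finset.sum_comm]
    apply Finset.sum_congr rfl
    intro y _
    rw [Tf, Finset.sum_mul]
    apply Finset.sum_congr rfl
    intro x _
    rw [hgdef]
    by_cases hw : W x y = 0
    · simp [hw, Real.zero_rpow (ne_of_gt hα)]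
    · have hw' : 0 < W x y := lt_of_le_of_ne ((hW x).1 y) (Ne.symm hw)
      by_cases hp : P x = 0
      · simp [hp]
      · have hp' : 0 < P x := lt_of_le_of_ne (hP.1 x) (Ne.symm hp)
        have hQ1 : 0 < Tf 1 P W y := Q1_pos hW hP (mul_pos hp' hw')
        have ht : 0 < W x y / Tf 1 P W y := div_pos hw' hQ1
        have hexp : Real.exp ((α - 1) * Real.log (W x y / Tf 1 P W y))
            = (W x y / Tf 1 P W y) ^ (α - 1) := by
          rw [Real.rpow_def_of_pos ht, mul_comm]
        rw [hexp, Real.div_rpow (le_of_lt hw') (le_of_lt hQ1)]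
        have h1 : W x y * (W x y ^ (α - 1) / Tf 1 P W y ^ (α - 1))
            = W x y ^ α * Tf 1 P W y ^ (1 - α) := by
          have e1 : W x y * W x y ^ (α - 1) = W x y ^ α := by
            nth_rewrite 1 [← Real.rpow_one (W x y)]
            rw [← Real.rpow_add hw']
            norm_num
          have e2 : (Tf 1 P W y ^ (α - 1))⁻¹ = Tf 1 P W y ^ (1 - α) := by
            rw [← Real.rpow_neg (le_of_lt hQ1)]
            norm_num
          rw [div_eq_mul_inv, ← mul_assoc, e1, e2]
        rw [mul_assoc, h1]
        ring
  rw [claim1, claim2] at hjen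
  -- hjen : exp ((α-1) * I₁) ≤ ∑ y, Tf α y * (Tf 1 y)^(1-α)
  have hpos : 0 < ∑ y, Tf α P W y * (Tf 1 P W y) ^ (1 - α) :=
    lt_of_lt_of_le (Real.exp_pos _) hjen
  have hlog : (α - 1) * renyiInfo 1 P W ≤
      Real.log (∑ y, Tf α P W y * (Tf 1 P W y) ^ (1 - α)) := by
    rw [← Real.log_exp ((α - 1) * renyiInfo 1 P W)]
    exact Real.log_le_log (Real.exp_pos _) hjen
  have hneg : (α - 1)⁻¹ ≤ 0 := le_of_lt (inv_lt_zero.mpr (by linarith))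
  have h4 := mul_le_mul_of_nonpos_left hlog hneg
  have h5 : (α - 1)⁻¹ * ((α - 1) * renyiInfo 1 P W) = renyiInfo 1 P W := by
    rw [← mul_assoc, inv_mul_cancel₀ (by linarith : α - (1:ℝ) ≠ 0), one_mul]
  linarith

/-- Sibson's identity: the tilted sum at the Rényi mean collapses to `Σ^β`. -/
lemma sibson_sum {β : ℝ} (hβ : 0 < β) (hβ1 : β < 1) :
    ∑ y, Tf β P W y * (Tf β P W y ^ β⁻¹ / Sg β P W) ^ (1 - β) = Sg β P W ^ β := by
  have hSg : 0 < Sg β P W := Sg_pos hW hP hβ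
  have key : ∀ y, Tf β P W y * (Tf β P W y ^ β⁻¹ / Sg β P W) ^ (1 - β)
      = Tf β P W y ^ β⁻¹ * Sg β P W ^ (β - 1) := by
    intro y
    rw [Real.div_rpow (Real.rpow_nonneg (Tf_nonneg hW hP y) _) (le_of_lt hSg)]
    rw [← Real.rpow_mul (Tf_nonneg hW hP y)]
    by_cases hT : Tf β P W y = 0
    · rw [hT, Real.zero_rpow (ne_of_gt (inv_pos.mpr hβ))]
      have hne : β⁻¹ * (1 - β) ≠ 0 :=
        ne_of_gt (mul_pos (inv_pos.mpr hβ) (by linarith))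
      rw [Real.zero_rpow hne]
      simp
    · have hT' : 0 < Tf β P W y := lt_of_le_of_ne (Tf_nonneg hW hP y) (Ne.symm hT)
      have e2 : (Sg β P W ^ (1 - β))⁻¹ = Sg β P W ^ (β - 1) := by
        rw [← Real.rpow_neg (le_of_lt hSg)]
        norm_num
      rw [div_eq_mul_inv, ← mul_assoc, e2]
      congr 1
      nth_rewrite 1 [← Real.rpow_one (Tf β P W y)]
      rw [← Real.rpow_add hT']
      congr 1
      field_simp
      ring
  simp only [key]
  rw [← Finset.sum_mul]
  rw [show (∑ y, Tf β P W y ^ β⁻¹) = Sg β P W from rfl]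
  nth_rewrite 1 [← Real.rpow_one (Sg β P W)]
  rw [← Real.rpow_add hSg]
  norm_num

/-- The Rényi mean is a pmf. -/
lemma renyiMean_pmf {β : ℝ} (hβ : 0 < β) :
    (∀ y, 0 ≤ Tf β P W y ^ β⁻¹ / Sg β P W) ∧
      ∑ y, Tf β P W y ^ β⁻¹ / Sg β P W = 1 := by
  have hSg : 0 < Sg β P W := Sg_pos hW hP hβ
  constructor
  · intro y
    exact div_nonneg (Real.rpow_nonneg (Tf_nonneg hW hP y) _) (le_of_lt hSg)
  · rw [← Finset.sum_div]
    exact div_self (ne_of_gt hSg)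

/-- Monotonicity of the Rényi information in the order. -/
lemma info_mono {α β : ℝ} (hα : 0 < α) (hαβ : α ≤ β) (hβ1 : β ≤ 1) :
    renyiInfo α P W ≤ renyiInfo β P W := by
  by_cases ha1 : α = 1
  · have : β = 1 := le_antisymm hβ1 (ha1 ▸ hαβ)
    rw [ha1, this]
  have hα1 : α < 1 := lt_of_le_of_ne (le_trans hαβ hβ1) ha1
  obtain ⟨x0, y0, hxy0⟩ := exists_pos hW hP
  by_cases hb1 : β = 1
  · subst hb1
    have hpos : 0 < ∑ y, Tf α P W y * (Tf 1 P W y) ^ (1 - α) := by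
      apply Finset.sum_pos'
      · intro y _
        exact mul_nonneg (Tf_nonneg hW hP y) (Real.rpow_nonneg (Tf_nonneg hW hP y) _)
      · exact ⟨y0, Finset.mem_univ y0,
          mul_pos (Tf_pos hW hP hα hxy0)
            (Real.rpow_pos_of_pos (Q1_pos hW hP hxy0) _)⟩
    exact le_trans
      (holder_le hW hP hα hα1 (fun y => Tf_nonneg hW hP y) (sum_Tf_one hW hP) hpos)
      (jensen_exp hW hP hα hα1)
  · have hβ1' : β < 1 := lt_of_le_of_ne hβ1 hb1
    have hβ0 : 0 < β := lt_of_lt_of_le hα hαβ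
    have hSg : 0 < Sg β P W := Sg_pos hW hP hβ0
    set q : Y → ℝ := fun y => Tf β P W y ^ β⁻¹ / Sg β P W with hqdef
    have hq := renyiMean_pmf hW hP (P := P) hβ0
    have hq0 : ∀ y, 0 ≤ q y := hq.1
    have hq1 : ∑ y, q y = 1 := hq.2
    have hqy0 : 0 < q y0 :=
      div_pos (Real.rpow_pos_of_pos (Tf_pos hW hP hβ0 hxy0) _) hSg
    have hposα : 0 < ∑ y, Tf α P W y * q y ^ (1 - α) := by
      apply Finset.sum_pos'
      · intro y _
        exact mul_nonneg (Tf_nonneg hW hP y) (Real.rpow_nonneg (hq0 y) _)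
      · exact ⟨y0, Finset.mem_univ y0,
          mul_pos (Tf_pos hW hP hα hxy0) (Real.rpow_pos_of_pos hqy0 _)⟩
    have hposβ : 0 < ∑ y, Tf β P W y * q y ^ (1 - β) := by
      rw [hqdef]
      rw [sibson_sum hW hP hβ0 hβ1']
      exact Real.rpow_pos_of_pos hSg β
    have step1 := holder_le hW hP hα hα1 hq0 hq1 hposα
    have step2 := jensen_pow hW hP hα hαβ hβ1' hq0 hposβ
    have step3 : (β - 1)⁻¹ * Real.log (∑ y, Tf β P W y * q y ^ (1 - β))
        = renyiInfo β P W := by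
      rw [hqdef, sibson_sum hW hP hβ0 hβ1', Real.log_rpow hSg,
        renyiInfo_eq hW hP hb1]
      ring
    linarith

/-- Quantitative comparison, via monotonicity of `Σ`. -/
lemma ratio_bound {α β : ℝ} (hα : 0 < α) (hαβ : α ≤ β) (hβ : β < 1) :
    renyiInfo β P W ≤ (β * (1 - α)) / (α * (1 - β)) * renyiInfo α P W := by
  have hα1 : α < 1 := lt_of_le_of_lt hαβ hβ
  have hβ0 : 0 < β := lt_of_lt_of_le hα hαβ
  rw [renyiInfo_eq' hW hP (ne_of_lt hβ), renyiInfo_eq' hW hP (ne_of_lt hα1)]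
  have hlog : -Real.log (Sg β P W) ≤ -Real.log (Sg α P W) :=
    neg_le_neg (Real.log_le_log (Sg_pos hW hP hα) (Sg_mono hW hP hα hαβ))
  have hnl : 0 ≤ -Real.log (Sg α P W) := by
    rw [neg_nonneg]
    exact Real.log_nonpos (le_of_lt (Sg_pos hW hP hα)) (Sg_le_one hW hP hα (le_of_lt hα1))
  have h1 : β / (1 - β) * -Real.log (Sg β P W) ≤ β / (1 - β) * -Real.log (Sg α P W) :=
    mul_le_mul_of_nonneg_left hlog (div_nonneg (le_of_lt hβ0) (by linarith))
  have h2 : β / (1 - β) * -Real.log (Sg α P W)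
      = β * (1 - α) / (α * (1 - β)) * (α / (1 - α) * -Real.log (Sg α P W)) := by
    rw [← mul_assoc]
    congr 1
    have hαne : α ≠ 0 := ne_of_gt hα
    have h1α : (1:ℝ) - α ≠ 0 := by linarith
    have h1b : (1:ℝ) - β ≠ 0 := by linarith
    field_simp
  linarith

/-- Expansion of the mutual information. -/
lemma expand1 : renyiInfo 1 P W = ∑ y, ((∑ x, P x * (W x y * Real.log (W x y)))
    - Tf 1 P W y * Real.log (Tf 1 P W y)) := by
  rw [renyiInfo, if_pos rfl]
  simp only [Finset.mul_sum]
  rw [Finset.sum_comm]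
  apply Finset.sum_congr rfl
  intro y _
  have key : ∀ x, P x * (W x y * Real.log (W x y / (∑ x', P x' * W x' y)))
      = P x * (W x y * Real.log (W x y)) - (P x * W x y) * Real.log (∑ x', P x' * W x' y) := by
    intro x
    by_cases hp : P x = 0
    · simp [hp]
    · have hp' : 0 < P x := lt_of_le_of_ne (hP.1 x) (Ne.symm hp)
      by_cases hw : W x y = 0
      · simp [hw]
      · have hw' : 0 < W x y := lt_of_le_of_ne ((hW x).1 y) (Ne.symm hw)
        have hQ1 : 0 < ∑ x', P x' * W x' y := by
          have := Q1_pos hW hP (mul_pos hp' hw')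
          rwa [Tf_one hW hP] at this
        rw [Real.log_div (ne_of_gt hw') (ne_of_gt hQ1)]
        ring
  simp only [key]
  rw [Finset.sum_sub_distrib, ← Finset.sum_mul]
  rw [Tf_one hW hP]

/-- Entropy bound: `H(Q) ≤ log |Y|`. -/
lemma entropy_le {Q : Y → ℝ} (hQ0 : ∀ y, 0 ≤ Q y) (hQ1 : ∑ y, Q y = 1) :
    -∑ y, Q y * Real.log (Q y) ≤ Real.log (Fintype.card Y) := by
  have hne : (Finset.univ : Finset Y).Nonempty := by
    rw [Finset.nonempty_iff_ne_empty]
    intro h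
    rw [h, Finset.sum_empty] at hQ1
    norm_num at hQ1
  have hcard : 0 < (Fintype.card Y : ℝ) := by
    have := Finset.card_pos.mpr hne
    simp only [Finset.card_univ] at this
    exact_mod_cast this
  set n : ℝ := (Fintype.card Y : ℝ) with hn
  have ptw : ∀ y, -(Q y * Real.log (Q y)) ≤ 1 / n - Q y + Q y * Real.log n := by
    intro y
    by_cases hq : Q y = 0
    · rw [hq]
      simp
      positivity
    · have hq' : 0 < Q y := lt_of_le_of_ne (hQ0 y) (Ne.symm hq)
      have h1 : Real.log (1 / (Q y * n)) ≤ 1 / (Q y * n) - 1 :=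
        Real.log_le_sub_one_of_pos (by positivity)
      have h2 : Real.log (1 / (Q y * n)) = -(Real.log (Q y) + Real.log n) := by
        rw [one_div, Real.log_inv, Real.log_mul (ne_of_gt hq') (ne_of_gt hcard)]
      rw [h2] at h1
      have h3 := mul_le_mul_of_nonneg_left h1 (le_of_lt hq')
      have h4 : Q y * (1 / (Q y * n) - 1) = 1 / n - Q y := by
        field_simp
      rw [h4] at h3
      nlinarith
  calc -∑ y, Q y * Real.log (Q y) = ∑ y, -(Q y * Real.log (Q y)) := by
        rw [Finset.sum_neg_distrib]
    _ ≤ ∑ y : Y, (1 / n - Q y + Q y * Real.log n) := Finset.sum_le_sum fun y _ => ptw y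
    _ = Real.log n := by
        rw [Finset.sum_add_distrib, Finset.sum_sub_distrib, ← Finset.sum_mul, hQ1]
        simp only [Finset.sum_const, Finset.card_univ, nsmul_eq_mul]
        rw [one_div]
        rw [mul_inv_cancel₀ (ne_of_gt hcard)]
        ring

lemma info_one_le_log : renyiInfo 1 P W ≤ Real.log (Fintype.card Y) := by
  rw [expand1 hW hP, Finset.sum_sub_distrib]
  have h1 : ∑ y, ∑ x, P x * (W x y * Real.log (W x y)) ≤ 0 := by
    apply Finset.sum_nonpos
    intro y _
    apply Finset.sum_nonpos
    intro x _
    have hlog : Real.log (W x y) ≤ 0 := Real.log_nonpos ((hW x).1 y) (W_le_one hW hP x y)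
    have : W x y * Real.log (W x y) ≤ 0 := mul_nonpos_of_nonneg_of_nonpos ((hW x).1 y) hlog
    exact mul_nonpos_of_nonneg_of_nonpos (hP.1 x) this
  have h2 := entropy_le hW hP (Q := fun y => Tf 1 P W y)
    (fun y => Tf_nonneg hW hP y) (sum_Tf_one hW hP)
  linarith

lemma info_le_log {α : ℝ} (hα : 0 < α) (hα1 : α ≤ 1) :
    renyiInfo α P W ≤ Real.log (Fintype.card Y) :=
  le_trans (info_mono hW hP hα hα1 (le_refl 1)) (info_one_le_log hW hP)

lemma hasDerivAt_Tf (y : Y) :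
    HasDerivAt (fun a => Tf a P W y) (∑ x, P x * (W x y * Real.log (W x y))) 1 := by
  apply HasDerivAt.fun_sum
  intro x _
  by_cases hw : W x y = 0
  · have hev : (fun a : ℝ => (fun _ => (0:ℝ)) a) =ᶠ[𝓝 (1:ℝ)] fun a => P x * W x y ^ a := by
      filter_upwards [Ioi_mem_nhds (zero_lt_one : (0:ℝ) < 1)] with a ha
      rw [hw, Real.zero_rpow (ne_of_gt ha), mul_zero]
    have h0 : HasDerivAt (fun _ : ℝ => (0:ℝ)) 0 1 := hasDerivAt_const 1 0
    have := h0.congr_of_eventuallyEq hev.symm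
    refine this.congr_deriv (Eq.symm ?_)
    rw [hw]
    simp
  · have hw' : 0 < W x y := lt_of_le_of_ne ((hW x).1 y) (Ne.symm hw)
    have h := ((Real.hasStrictDerivAt_const_rpow hw' 1).hasDerivAt).const_mul (P x)
    refine h.congr_deriv (Eq.symm ?_)
    rw [Real.rpow_one]

lemma hasDerivAt_term (y : Y) :
    HasDerivAt (fun a => Tf a P W y ^ a⁻¹)
      ((∑ x, P x * (W x y * Real.log (W x y))) - Tf 1 P W y * Real.log (Tf 1 P W y)) 1 := by
  by_cases hT : Tf 1 P W y = 0
  · have hzero : ∀ x, P x * W x y = 0 := by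
      have h := (Finset.sum_eq_zero_iff_of_nonneg
        (fun x _ => mul_nonneg (hP.1 x) ((hW x).1 y))).mp ((Tf_one hW hP y) ▸ hT)
      intro x; exact h x (Finset.mem_univ x)
    have hTa : ∀ a : ℝ, 0 < a → Tf a P W y = 0 := by
      intro a ha
      apply Finset.sum_eq_zero
      intro x _
      rcases mul_eq_zero.mp (hzero x) with hp | hww
      · rw [hp, zero_mul]
      · rw [hww, Real.zero_rpow (ne_of_gt ha), mul_zero]
    have hev : (fun _ : ℝ => (0:ℝ)) =ᶠ[𝓝 (1:ℝ)] fun a => Tf a P W y ^ a⁻¹ := by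
      filter_upwards [Ioi_mem_nhds (zero_lt_one : (0:ℝ) < 1)] with a ha
      rw [hTa a ha, Real.zero_rpow (inv_ne_zero (ne_of_gt ha))]
    have h0 : HasDerivAt (fun _ : ℝ => (0:ℝ)) 0 1 := hasDerivAt_const 1 0
    have := h0.congr_of_eventuallyEq hev.symm
    refine this.congr_deriv (Eq.symm ?_)
    rw [hT]
    have : ∀ x, P x * (W x y * Real.log (W x y)) = 0 := by
      intro x
      rcases mul_eq_zero.mp (hzero x) with hp | hww
      · rw [hp, zero_mul]
      · rw [hww]; simp
    rw [Finset.sum_eq_zero fun x _ => this x]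
    simp
  · have hT' : 0 < Tf 1 P W y := lt_of_le_of_ne (Tf_nonneg hW hP y) (Ne.symm hT)
    have hTd := hasDerivAt_Tf hW hP y
    set T' : ℝ := ∑ x, P x * (W x y * Real.log (W x y)) with hT'def
    have hev : ∀ᶠ a in 𝓝 (1:ℝ), 0 < Tf a P W y :=
      hTd.continuousAt.eventually (eventually_gt_nhds hT')
    have h1 : HasDerivAt (fun a : ℝ => a⁻¹) (-1) 1 := by
      have := hasDerivAt_inv (one_ne_zero : (1:ℝ) ≠ 0)
      refine this.congr_deriv (Eq.symm ?_)
      norm_num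
    have h2 : HasDerivAt (fun a => Real.log (Tf a P W y)) (T' / Tf 1 P W y) 1 :=
      hTd.log (ne_of_gt hT')
    have hu := h1.mul h2
    have hg := hu.exp
    have heq : (fun a => Real.exp (a⁻¹ * Real.log (Tf a P W y)))
        =ᶠ[𝓝 (1:ℝ)] fun a => Tf a P W y ^ a⁻¹ := by
      filter_upwards [hev] with a ha
      rw [Real.rpow_def_of_pos ha, mul_comm]
    have hfinal := hg.congr_of_eventuallyEq heq.symm
    refine hfinal.congr_deriv (Eq.symm ?_)
    simp only [Pi.mul_apply]
    rw [inv_one, one_mul, Real.exp_log hT']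
    field_simp
    ring

lemma hasDerivAt_logSg :
    HasDerivAt (fun a => Real.log (Sg a P W)) (renyiInfo 1 P W) 1 := by
  have hS : HasDerivAt (fun a => Sg a P W)
      (∑ y, ((∑ x, P x * (W x y * Real.log (W x y)))
        - Tf 1 P W y * Real.log (Tf 1 P W y))) 1 := by
    apply HasDerivAt.fun_sum
    intro y _
    exact hasDerivAt_term hW hP y
  have hSg1 : Sg 1 P W = 1 := Sg_one hW hP
  have := hS.log (by rw [hSg1]; norm_num)
  rw [hSg1, div_one] at this
  rw [expand1 hW hP]
  exact this

lemma tendsto_info :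
    Tendsto (fun α => renyiInfo α P W) (nhdsWithin 1 (Set.Iio 1))
      (nhds (renyiInfo 1 P W)) := by
  have hd := hasDerivAt_logSg hW hP (P := P)
  rw [hasDerivAt_iff_tendsto_slope] at hd
  have h1 : Tendsto (slope (fun a => Real.log (Sg a P W)) 1)
      (nhdsWithin 1 (Set.Iio 1)) (nhds (renyiInfo 1 P W)) :=
    hd.mono_left (nhdsWithin_mono 1 (fun a ha => ne_of_lt ha))
  have h2 : Tendsto (fun a : ℝ => a) (nhdsWithin 1 (Set.Iio 1)) (nhds 1) :=
    tendsto_id.mono_left nhdsWithin_le_nhds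
  have hmul := h2.mul h1
  rw [one_mul] at hmul
  apply hmul.congr'
  filter_upwards [eventually_mem_nhdsWithin] with a (ha : a ∈ Set.Iio (1:ℝ))
  have ha1 : a ≠ 1 := ne_of_lt ha
  have hne : a - 1 ≠ 0 := sub_ne_zero.mpr ha1
  rw [slope_def_field, renyiInfo_eq hW hP ha1]
  have hG1 : Real.log (Sg 1 P W) = 0 := by rw [Sg_one hW hP, Real.log_one]
  rw [hG1]
  field_simp
  ring

end base

section cap

variable {W : X → Y → ℝ} (hW : ∀ x, IsPMF (W x)) [Nonempty X]

lemma uniform_pmf : IsPMF (fun _ : X => (Fintype.card X : ℝ)⁻¹) := by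
  have hcard : 0 < (Fintype.card X : ℝ) := by
    have := Fintype.card_pos (α := X)
    exact_mod_cast this
  constructor
  · intro _; positivity
  · rw [Finset.sum_const, Finset.card_univ, nsmul_eq_mul]
    exact mul_inv_cancel₀ (ne_of_gt hcard)

include hW

lemma card_Y_pos : 0 < (Fintype.card Y : ℝ) := by
  have hP := (hW (Classical.arbitrary X)).2
  have hne : (Finset.univ : Finset Y).Nonempty := by
    rw [Finset.nonempty_iff_ne_empty]
    intro h
    rw [h, Finset.sum_empty] at hP
    norm_num at hP
  have := Finset.card_pos.mpr hne
  simp only [Finset.card_univ] at this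
  exact_mod_cast this

lemma log_card_nonneg : 0 ≤ Real.log (Fintype.card Y) := by
  apply Real.log_nonneg
  have h := card_Y_pos hW
  have : (1 : ℕ) ≤ Fintype.card Y := by exact_mod_cast h
  exact_mod_cast this

lemma capSet_nonempty (α : ℝ) :
    {c | ∃ P : X → ℝ, IsPMF P ∧ c = renyiInfo α P W}.Nonempty :=
  ⟨renyiInfo α (fun _ : X => (Fintype.card X : ℝ)⁻¹) W, _, uniform_pmf, rfl⟩

lemma capSet_bdd {α : ℝ} (hα : 0 < α) (hα1 : α ≤ 1) :
    BddAbove {c | ∃ P : X → ℝ, IsPMF P ∧ c = renyiInfo α P W} := by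
  refine ⟨Real.log (Fintype.card Y), ?_⟩
  rintro c ⟨P, hP, rfl⟩
  exact info_le_log hW hP hα hα1

lemma le_cap {α : ℝ} (hα : 0 < α) (hα1 : α ≤ 1) {P : X → ℝ} (hP : IsPMF P) :
    renyiInfo α P W ≤ renyiCap α W :=
  le_csSup (capSet_bdd hW hα hα1) ⟨P, hP, rfl⟩

lemma cap_le {α : ℝ} {B : ℝ} (hb : ∀ P : X → ℝ, IsPMF P → renyiInfo α P W ≤ B) :
    renyiCap α W ≤ B := by
  apply csSup_le (capSet_nonempty hW α)
  rintro c ⟨P, hP, rfl⟩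
  exact hb P hP

lemma cap_mono {α β : ℝ} (hα : 0 < α) (hαβ : α ≤ β) (hβ1 : β ≤ 1) :
    renyiCap α W ≤ renyiCap β W := by
  apply cap_le hW
  intro P hP
  exact le_trans (info_mono hW hP hα hαβ hβ1)
    (le_cap hW (lt_of_lt_of_le hα hαβ) hβ1 hP)

lemma cap_lip {α β : ℝ} (hα : 0 < α) (hαβ : α ≤ β) (hβ : β < 1) :
    renyiCap β W ≤ renyiCap α W
      + (β - α) / (α * (1 - β)) * Real.log (Fintype.card Y) := by
  have hα1 : α < 1 := lt_of_le_of_lt hαβ hβ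
  have hβ0 : 0 < β := lt_of_lt_of_le hα hαβ
  apply cap_le hW
  intro P hP
  have h1 := ratio_bound hW hP hα hαβ hβ
  have hd0 : 0 ≤ (β - α) / (α * (1 - β)) := by
    apply div_nonneg (by linarith)
    have : 0 < α * (1 - β) := mul_pos hα (by linarith)
    linarith
  have hc : β * (1 - α) / (α * (1 - β)) = 1 + (β - α) / (α * (1 - β)) := by
    have h₁ : α ≠ 0 := ne_of_gt hα
    have h₂ : (1:ℝ) - β ≠ 0 := by linarith
    field_simp
    ring
  have hIα_le := info_le_log hW hP hα (le_of_lt hα1)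
  have hIα0 := renyiInfo_nonneg hW hP hα hα1
  have h2 : (β - α) / (α * (1 - β)) * renyiInfo α P W
      ≤ (β - α) / (α * (1 - β)) * Real.log (Fintype.card Y) :=
    mul_le_mul_of_nonneg_left hIα_le hd0
  have h3 := le_cap hW hα (le_of_lt hα1) hP
  rw [hc] at h1
  nlinarith

end cap

end RC

end

/-- the Rényi capacity is nondecreasing and continuous in the order on `(0,1]`. -/
theorem renyiCap_monotone_continuous {X Y : Type*} [Fintype X] [Fintype Y] [Nonempty X]
    (W : X → Y → ℝ) (hW : ∀ x, IsPMF (W x)) :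
    MonotoneOn (fun α => renyiCap α W) (Set.Ioc 0 1) ∧
    ContinuousOn (fun α => renyiCap α W) (Set.Ioc 0 1) := by
  constructor
  · intro a ha b hb hab
    exact RC.cap_mono hW ha.1 hab hb.2
  · intro γ hγ
    by_cases hγ1 : γ = 1
    · subst hγ1
      rw [ContinuousWithinAt, tendsto_order]
      constructor
      · intro b hb
        obtain ⟨c, ⟨P, hP, rfl⟩, hbc⟩ :=
          exists_lt_of_lt_csSup (RC.capSet_nonempty hW 1) hb
        have ht := RC.tendsto_info hW hP
        have h1 : ∀ᶠ α in nhdsWithin 1 (Set.Iio 1), b < renyiInfo α P W :=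
          ht.eventually (eventually_gt_nhds hbc)
        have h2 : ∀ᶠ α in nhdsWithin (1:ℝ) (Set.Iio 1), (0:ℝ) < α :=
          Filter.Eventually.filter_mono nhdsWithin_le_nhds
            (eventually_gt_nhds zero_lt_one)
        have hIio : ∀ᶠ α in nhdsWithin (1:ℝ) (Set.Iio 1), b < renyiCap α W := by
          filter_upwards [h1, h2, eventually_mem_nhdsWithin] with α hα1 hα0 hmem
          exact lt_of_lt_of_le hα1 (RC.le_cap hW hα0 (le_of_lt hmem) hP)
        have hle : nhdsWithin (1:ℝ) (Set.Ioc 0 1) ≤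
            nhdsWithin 1 (Set.Iio 1) ⊔ nhdsWithin 1 {(1:ℝ)} := by
          rw [← nhdsWithin_union]
          apply nhdsWithin_mono
          intro x hx
          rcases lt_or_eq_of_le hx.2 with h | h
          · exact Or.inl h
          · exact Or.inr h
        have hsup : ∀ᶠ α in (nhdsWithin (1:ℝ) (Set.Iio 1) ⊔ nhdsWithin (1:ℝ) {(1:ℝ)}),
            b < renyiCap α W := by
          rw [Filter.eventually_sup]
          refine ⟨hIio, ?_⟩
          rw [nhdsWithin_singleton, Filter.eventually_pure]
          exact hb
        exact hsup.filter_mono hle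
      · intro b hb
        filter_upwards [eventually_mem_nhdsWithin] with α hα
        exact lt_of_le_of_lt (RC.cap_mono hW hα.1 hα.2 le_rfl) hb
    · have hγ0 : 0 < γ := hγ.1
      have hγlt : γ < 1 := lt_of_le_of_ne hγ.2 hγ1
      rw [Metric.continuousWithinAt_iff]
      intro ε hε
      set n : ℝ := Real.log (Fintype.card Y) with hn
      have hn0 : 0 ≤ n := RC.log_card_nonneg hW
      have hprod : 0 < γ / 2 * ((1 - γ) / 2) := by
        apply mul_pos <;> linarith
      set K : ℝ := n / (γ / 2 * ((1 - γ) / 2)) with hKdef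
      have hK0 : 0 ≤ K := div_nonneg hn0 (le_of_lt hprod)
      refine ⟨min (min (γ / 2) ((1 - γ) / 2)) (ε / (K + 1)), ?_, ?_⟩
      · apply lt_min (lt_min (by linarith) (by linarith)) (by positivity)
      intro α hα hdist
      rw [Real.dist_eq] at hdist ⊢
      have hd1 : |α - γ| < γ / 2 :=
        lt_of_lt_of_le hdist (le_trans (min_le_left _ _) (min_le_left _ _))
      have hd2 : |α - γ| < (1 - γ) / 2 :=
        lt_of_lt_of_le hdist (le_trans (min_le_left _ _) (min_le_right _ _))
      have hd3 : |α - γ| < ε / (K + 1) := lt_of_lt_of_le hdist (min_le_right _ _)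
      have habs1 := abs_lt.mp hd1
      have habs2 := abs_lt.mp hd2
      have hεK : (ε / (K + 1)) * K < ε := by
        rw [div_mul_eq_mul_div, div_lt_iff₀ (by positivity : (0:ℝ) < K + 1)]
        nlinarith
      rcases le_total α γ with hle | hle
      · -- α ≤ γ < 1
        have hmono := RC.cap_mono hW hα.1 hle (le_of_lt hγlt)
        have hbound := RC.cap_lip hW hα.1 hle hγlt
        have hα2 : γ / 2 ≤ α := by
          have := habs1.1
          linarith
        have hprodle : γ / 2 * ((1 - γ) / 2) ≤ α * (1 - γ) := by
          apply mul_le_mul hα2 (by linarith) (by linarith) (le_of_lt hα.1)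
        have e1 : (γ - α) / (α * (1 - γ)) * n ≤ (γ - α) * K := by
          rw [hKdef]
          rw [show (γ - α) * (n / (γ / 2 * ((1 - γ) / 2)))
            = (γ - α) / (γ / 2 * ((1 - γ) / 2)) * n by ring]
          apply mul_le_mul_of_nonneg_right _ hn0
          exact div_le_div_of_nonneg_left (by linarith) hprod hprodle
        have e2 : (γ - α) * K ≤ (ε / (K + 1)) * K := by
          apply mul_le_mul_of_nonneg_right _ hK0
          have : γ - α ≤ |α - γ| := by
            rw [abs_sub_comm]
            exact le_abs_self _
          linarith [hd3]
        rw [abs_sub_comm, abs_of_nonneg (sub_nonneg.mpr hmono)]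
        linarith
      · -- γ ≤ α
        have hαlt : α < 1 := by
          have := habs2.2
          linarith
        have hmono := RC.cap_mono hW hγ0 hle (le_of_lt hαlt)
        have hbound := RC.cap_lip hW hγ0 hle hαlt
        have h1α : (1 - γ) / 2 ≤ 1 - α := by
          have := habs2.2
          linarith
        have hprodle : γ / 2 * ((1 - γ) / 2) ≤ γ * (1 - α) := by
          apply mul_le_mul (by linarith) h1α (by linarith) (by linarith)
        have e1 : (α - γ) / (γ * (1 - α)) * n ≤ (α - γ) * K := by
          rw [hKdef]
          rw [show (α - γ) * (n / (γ / 2 * ((1 - γ) / 2)))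
            = (α - γ) / (γ / 2 * ((1 - γ) / 2)) * n by ring]
          apply mul_le_mul_of_nonneg_right _ hn0
          exact div_le_div_of_nonneg_left (by linarith) hprod hprodle
        have e2 : (α - γ) * K ≤ (ε / (K + 1)) * K := by
          apply mul_le_mul_of_nonneg_right _ hK0
          have : α - γ ≤ |α - γ| := le_abs_self _
          linarith [hd3]
        rw [abs_of_nonneg (sub_nonneg.mpr hmono)]
        linarith
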